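/- Let λ, μ be real numbers with μ > 0 and 3λ + 2μ > 0, and let κ₀ = μ/(2(λ+2μ)). For n ≥ 1 define λ_{M,n} = (3λ − 2μ(2n² − 2n − 3))/(2(λ+2μ)(4n² − 1)). Then λ_{M,n} + κ₀ = (3λ + 5μ + 4μn)/(2(λ+2μ)(4n² − 1)) > 0 for all n ≥ 1, and lim_{n→∞} (λ_{M,n} + κ₀)/(μ/(2(λ+2μ)n)) = 1. -/

import Mathlib

open Filter

/-- The shifted eigenvalues `λ_{M,n} + κ₀` of the elastostatic Neumann–Poincaré operator:
explicit formula, positivity for all `n ≥ 1`, and asymptotics `∼ μ/(2(λ+2μ)n)`. -/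
theorem lambdaM_shifted_pos_and_asymp (lam mu : ℝ) (hmu : 0 < mu)
    (hconv : 0 < 3 * lam + 2 * mu)
    (kappa0 : ℝ) (hkappa0 : kappa0 = mu / (2 * (lam + 2 * mu)))
    (lamM : ℕ → ℝ)
    (hlamM : ∀ n : ℕ, lamM n =
      (3 * lam - 2 * mu * (2 * (n:ℝ)^2 - 2 * (n:ℝ) - 3)) /
        (2 * (lam + 2 * mu) * (4 * (n:ℝ)^2 - 1))) :
    (∀ n : ℕ, 1 ≤ n →
      lamM n + kappa0 =
        (3 * lam + 5 * mu + 4 * mu * (n:ℝ)) / (2 * (lam + 2 * mu) * (4 * (n:ℝ)^2 - 1)) ∧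
      0 < lamM n + kappa0) ∧
    Tendsto (fun n : ℕ => (lamM n + kappa0) / (mu / (2 * (lam + 2 * mu) * (n:ℝ))))
      atTop (nhds 1) := by
  have hD : 0 < lam + 2 * mu := by nlinarith
  have hDne : (lam + 2 * mu) ≠ 0 := ne_of_gt hD
  have hmune : mu ≠ 0 := ne_of_gt hmu
  constructor
  · intro n hn
    have hn1 : (1:ℝ) ≤ (n:ℝ) := by exact_mod_cast hn
    have hden : (0:ℝ) < 4 * (n:ℝ)^2 - 1 := by nlinarith
    have hform : lamM n + kappa0 =
        (3 * lam + 5 * mu + 4 * mu * (n:ℝ)) / (2 * (lam + 2 * mu) * (4 * (n:ℝ)^2 - 1)) := by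
      rw [hlamM, hkappa0]
      rw [div_add_div _ _ (mul_ne_zero (mul_ne_zero two_ne_zero hDne) hden.ne') (mul_ne_zero two_ne_zero hDne),
        div_eq_div_iff (mul_ne_zero (mul_ne_zero (mul_ne_zero two_ne_zero hDne) hden.ne') (mul_ne_zero two_ne_zero hDne)) (mul_ne_zero (mul_ne_zero two_ne_zero hDne) hden.ne')]
      ring
    refine ⟨hform, ?_⟩
    rw [hform]
    apply div_pos
    · nlinarith
    · positivity
  · have hEq : (fun n : ℕ => (lamM n + kappa0) / (mu / (2 * (lam + 2 * mu) * (n:ℝ))))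
        =ᶠ[atTop] fun n : ℕ =>
          (4 * mu + (3 * lam + 5 * mu) * (1 / (n:ℝ))) / (mu * (4 - (1 / (n:ℝ))^2)) := by
      filter_upwards [eventually_ge_atTop 1] with n hn
      have hn1 : (1:ℝ) ≤ (n:ℝ) := by exact_mod_cast hn
      have hnne : (n:ℝ) ≠ 0 := by positivity
      have hden : (4 * (n:ℝ)^2 - 1) ≠ 0 := by nlinarith
      rw [hlamM, hkappa0]
      rw [div_add_div _ _ (mul_ne_zero (mul_ne_zero two_ne_zero hDne) hden) (mul_ne_zero two_ne_zero hDne)]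
      field_simp
      ring
    rw [Filter.tendsto_congr' hEq]
    have h0 : Tendsto (fun n : ℕ => 1 / (n:ℝ)) atTop (nhds 0) :=
      tendsto_one_div_atTop_nhds_zero_nat
    have hnum : Tendsto (fun n : ℕ => 4 * mu + (3 * lam + 5 * mu) * (1 / (n:ℝ)))
        atTop (nhds (4 * mu + (3 * lam + 5 * mu) * 0)) :=
      tendsto_const_nhds.add (tendsto_const_nhds.mul h0)
    have hdenl : Tendsto (fun n : ℕ => mu * (4 - (1 / (n:ℝ))^2))
        atTop (nhds (mu * (4 - 0^2))) :=
      tendsto_const_nhds.mul (tendsto_const_nhds.sub (h0.pow 2))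
    have hne : mu * (4 - (0:ℝ)^2) ≠ 0 := by
      simp only [ne_eq]
      nlinarith
    have := hnum.div hdenl hne
    convert this using 2
    · rfl
    field_simp
    ring
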